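/- Let {A_k}_{k≥1} be a sequence of d×d real matrices with all entries strictly positive, fix m ≥ 1, and suppose τ(A_m A_{m+1} ⋯ A_n) → 0 as n → ∞. Then the intersection ⋂_{n ≥ m} A_m A_{m+1} ⋯ A_n (ℝ₊^d) is a single ray: there exists a vector η ∈ ℝ^d with all coordinates strictly positive such that ⋂_{n ≥ m} A_m ⋯ A_n (ℝ₊^d) = { tη : t ≥ 0 }. -/

import Mathlib

open Filter

/-- The Hilbert projective metric on strictly positive vectors in `ℝ^d`. -/
noncomputable def hilbertDist {d : ℕ} (x y : Fin d → ℝ) : ℝ :=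
  Real.log (⨆ i : Fin d, ⨆ j : Fin d, (x i * y j) / (x j * y i))

/-- The Birkhoff contraction coefficient. -/
noncomputable def birkhoffCoeff {d : ℕ} (A : Matrix (Fin d) (Fin d) ℝ) : ℝ :=
  sSup {t : ℝ | ∃ x y : Fin d → ℝ, (∀ i, 0 < x i) ∧ (∀ i, 0 < y i) ∧
    0 < hilbertDist x y ∧ t = hilbertDist (A.mulVec x) (A.mulVec y) / hilbertDist x y}

/-- The forward product `P_m^n = A_m A_{m+1} ⋯ A_n`. -/
def fwdProd {d : ℕ} (A : ℕ → Matrix (Fin d) (Fin d) ℝ) (m n : ℕ) :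
    Matrix (Fin d) (Fin d) ℝ :=
  ((List.range' m (n + 1 - m)).map A).prod

/-- The nonnegative orthant `ℝ₊^d`. -/
def posCone (d : ℕ) : Set (Fin d → ℝ) := {x | ∀ i, 0 ≤ x i}

namespace Stmt10
variable {d : ℕ}

noncomputable def Sfun (x y : Fin d → ℝ) : ℝ := ⨆ i : Fin d, ⨆ j : Fin d, (x i * y j) / (x j * y i)

lemma hilbertDist_eq (x y : Fin d → ℝ) : hilbertDist x y = Real.log (Sfun x y) := rfl

lemma ratio_le_Sfun (x y : Fin d → ℝ) (i j : Fin d) :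
    (x i * y j) / (x j * y i) ≤ Sfun x y := by
  have h1 : (x i * y j) / (x j * y i) ≤ ⨆ j' : Fin d, (x i * y j') / (x j' * y i) :=
    le_ciSup (f := fun j' => (x i * y j') / (x j' * y i))
      (Set.Finite.bddAbove (Set.finite_range _)) j
  exact h1.trans (le_ciSup (f := fun i' => ⨆ j' : Fin d, (x i' * y j') / (x j' * y i'))
    (Set.Finite.bddAbove (Set.finite_range _)) i)

variable [NeZero d]

lemma Sfun_le {x y : Fin d → ℝ} {c : ℝ} (h : ∀ i j, (x i * y j) / (x j * y i) ≤ c) :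
    Sfun x y ≤ c :=
  ciSup_le fun i => ciSup_le fun j => h i j

lemma one_le_Sfun {x y : Fin d → ℝ} (hx : ∀ i, 0 < x i) (hy : ∀ i, 0 < y i) :
    1 ≤ Sfun x y := by
  obtain ⟨i⟩ : Nonempty (Fin d) := inferInstance
  have := ratio_le_Sfun x y i i
  rwa [div_self (mul_pos (hx i) (hy i)).ne'] at this

lemma Sfun_pos {x y : Fin d → ℝ} (hx : ∀ i, 0 < x i) (hy : ∀ i, 0 < y i) :
    0 < Sfun x y := lt_of_lt_of_le one_pos (one_le_Sfun hx hy)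

lemma mulVec_nonneg {P : Matrix (Fin d) (Fin d) ℝ} (hP : ∀ i j, 0 < P i j)
    {u : Fin d → ℝ} (hu : ∀ j, 0 ≤ u j) (i : Fin d) : 0 ≤ P.mulVec u i := by
  rw [Matrix.mulVec, dotProduct]
  exact Finset.sum_nonneg fun j _ => mul_nonneg (hP i j).le (hu j)

lemma mulVec_pos {P : Matrix (Fin d) (Fin d) ℝ} (hP : ∀ i j, 0 < P i j)
    {u : Fin d → ℝ} (hu : ∀ j, 0 ≤ u j) (hune : u ≠ 0) (i : Fin d) :
    0 < P.mulVec u i := by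
  rw [Matrix.mulVec, dotProduct]
  obtain ⟨j0, hj0⟩ := Function.ne_iff.1 hune
  exact Finset.sum_pos' (fun j _ => mul_nonneg (hP i j).le (hu j))
    ⟨j0, Finset.mem_univ _, mul_pos (hP i j0) ((hu j0).lt_of_ne (Ne.symm hj0))⟩

lemma mulVec_pos' {P : Matrix (Fin d) (Fin d) ℝ} (hP : ∀ i j, 0 < P i j)
    {u : Fin d → ℝ} (hu : ∀ j, 0 < u j) (i : Fin d) : 0 < P.mulVec u i :=
  mulVec_pos hP (fun j => (hu j).le) (fun h0 => by
    have := hu (Classical.arbitrary (Fin d)); rw [h0] at this; exact lt_irrefl _ this) i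

lemma sum_mul_sum_le (f g F G : Fin d → ℝ) (C : ℝ)
    (h : ∀ j k, f j * g k ≤ C * (F j * G k)) :
    (∑ j, f j) * (∑ k, g k) ≤ C * ((∑ j, F j) * (∑ k, G k)) := by
  rw [Finset.sum_mul_sum, Finset.sum_mul_sum]
  calc (∑ j, ∑ k, f j * g k) ≤ ∑ j, ∑ k, C * (F j * G k) :=
        Finset.sum_le_sum fun j _ => Finset.sum_le_sum fun k _ => h j k
    _ = C * ∑ j, ∑ k, F j * G k := by rw [Finset.mul_sum]; congr 1; ext j; rw [Finset.mul_sum]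

lemma mulVec_apply (P : Matrix (Fin d) (Fin d) ℝ) (u : Fin d → ℝ) (i : Fin d) :
    P.mulVec u i = ∑ j, P i j * u j := rfl

set_option linter.unusedSectionVars false



-- non-expansiveness: Sfun (Px) (Py) ≤ Sfun x y
lemma Sfun_mulVec_le {P : Matrix (Fin d) (Fin d) ℝ} (hP : ∀ i j, 0 < P i j)
    {x y : Fin d → ℝ} (hx : ∀ i, 0 < x i) (hy : ∀ i, 0 < y i) :
    Sfun (P.mulVec x) (P.mulVec y) ≤ Sfun x y := by
  apply Sfun_le
  intro i l
  rw [div_le_iff₀ (mul_pos (mulVec_pos' hP hx l) (mulVec_pos' hP hy i))]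
  have key : (∑ j, P i j * x j) * (∑ k, P l k * y k) ≤
      Sfun x y * ((∑ j, P i j * y j) * (∑ k, P l k * x k)) := by
    apply sum_mul_sum_le
    intro j k
    have h1 : x j * y k ≤ Sfun x y * (x k * y j) := by
      have := ratio_le_Sfun x y j k
      rwa [div_le_iff₀ (mul_pos (hx k) (hy j))] at this
    calc P i j * x j * (P l k * y k) = (P i j * P l k) * (x j * y k) := by ring
      _ ≤ (P i j * P l k) * (Sfun x y * (x k * y j)) :=
          mul_le_mul_of_nonneg_left h1 (mul_pos (hP i j) (hP l k)).le
      _ = Sfun x y * (P i j * y j * (P l k * x k)) := by ring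
  rw [mulVec_apply, mulVec_apply, mulVec_apply, mulVec_apply]
  calc (∑ j, P i j * x j) * (∑ k, P l k * y k) ≤
      Sfun x y * ((∑ j, P i j * y j) * (∑ k, P l k * x k)) := key
    _ = Sfun x y * ((∑ k, P l k * x k) * (∑ j, P i j * y j)) := by ring

lemma hilbertDist_nonneg {x y : Fin d → ℝ} (hx : ∀ i, 0 < x i) (hy : ∀ i, 0 < y i) :
    0 ≤ hilbertDist x y := by
  rw [hilbertDist_eq]
  exact Real.log_nonneg (one_le_Sfun hx hy)

lemma tau_set_le_one {P : Matrix (Fin d) (Fin d) ℝ} (hP : ∀ i j, 0 < P i j) :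
    ∀ t ∈ {t : ℝ | ∃ x y : Fin d → ℝ, (∀ i, 0 < x i) ∧ (∀ i, 0 < y i) ∧
      0 < hilbertDist x y ∧ t = hilbertDist (P.mulVec x) (P.mulVec y) / hilbertDist x y},
      t ≤ 1 := by
  rintro t ⟨x, y, hx, hy, hd0, rfl⟩
  rw [div_le_one hd0, hilbertDist_eq, hilbertDist_eq]
  exact Real.log_le_log (Sfun_pos (mulVec_pos' hP hx) (mulVec_pos' hP hy))
    (Sfun_mulVec_le hP hx hy)

lemma mem_le_tau {P : Matrix (Fin d) (Fin d) ℝ} (hP : ∀ i j, 0 < P i j) {t : ℝ}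
    (ht : t ∈ {t : ℝ | ∃ x y : Fin d → ℝ, (∀ i, 0 < x i) ∧ (∀ i, 0 < y i) ∧
      0 < hilbertDist x y ∧ t = hilbertDist (P.mulVec x) (P.mulVec y) / hilbertDist x y}) :
    t ≤ birkhoffCoeff P :=
  le_csSup ⟨1, tau_set_le_one hP⟩ ht

lemma tau_lower {P : Matrix (Fin d) (Fin d) ℝ} (hP : ∀ i j, 0 < P i j)
    {j k : Fin d} (hjk : j ≠ k) (i1 l1 : Fin d) :
    Real.log ((Real.exp 1 * ((P i1 j * P l1 k) / (P l1 j * P i1 k)) + 1) /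
      ((P i1 j * P l1 k) / (P l1 j * P i1 k) + Real.exp 1)) / 2 ≤ birkhoffCoeff P := by
  set a : ℝ := Real.exp 1 with ha
  have ha1 : 1 < a := Real.one_lt_exp_iff.2 one_pos
  have ha0 : 0 < a := lt_trans one_pos ha1
  have ha2 : 1 ≤ a ^ 2 := by nlinarith
  have ha3 : 1 ≤ a ^ 3 := by nlinarith
  have ha4 : 1 ≤ a ^ 4 := by nlinarith
  set c : ℝ := P l1 k / P l1 j with hc
  have hc0 : 0 < c := div_pos (hP l1 k) (hP l1 j)
  set ρ : ℝ := (P i1 j * P l1 k) / (P l1 j * P i1 k) with hρ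
  have hρ0 : 0 < ρ := div_pos (mul_pos (hP i1 j) (hP l1 k)) (mul_pos (hP l1 j) (hP i1 k))
  set w : Fin d → ℝ := fun i => if i = j ∨ i = k then 0 else 1 with hw
  have hw0 : ∀ i, 0 ≤ w i := by intro i; rw [hw]; dsimp only; split_ifs <;> norm_num
  set xb : Fin d → ℝ := Pi.single j (a * c) + Pi.single k 1 with hxb
  set yb : Fin d → ℝ := Pi.single j c + Pi.single k a with hyb
  set X : ℝ → Fin d → ℝ := fun δ => xb + δ • w with hX
  set Y : ℝ → Fin d → ℝ := fun δ => yb + δ • w with hY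
  have hXj : ∀ δ, X δ j = a * c := by
    intro δ; simp [hX, hxb, hw, Pi.single_apply, hjk]
  have hXk : ∀ δ, X δ k = 1 := by
    intro δ; simp [hX, hxb, hw, Pi.single_apply, Ne.symm hjk]
  have hXo : ∀ δ i, i ≠ j → i ≠ k → X δ i = δ := by
    intro δ i h1 h2; simp [hX, hxb, hw, Pi.single_apply, h1, h2]
  have hYj : ∀ δ, Y δ j = c := by
    intro δ; simp [hY, hyb, hw, Pi.single_apply, hjk]
  have hYk : ∀ δ, Y δ k = a := by
    intro δ; simp [hY, hyb, hw, Pi.single_apply, Ne.symm hjk]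
  have hYo : ∀ δ i, i ≠ j → i ≠ k → Y δ i = δ := by
    intro δ i h1 h2; simp [hY, hyb, hw, Pi.single_apply, h1, h2]
  have hXp : ∀ δ, 0 < δ → ∀ i, 0 < X δ i := by
    intro δ hδ i
    by_cases h1 : i = j
    · rw [h1, hXj]; positivity
    by_cases h2 : i = k
    · rw [h2, hXk]; norm_num
    · rw [hXo δ i h1 h2]; exact hδ
  have hYp : ∀ δ, 0 < δ → ∀ i, 0 < Y δ i := by
    intro δ hδ i
    by_cases h1 : i = j
    · rw [h1, hYj]; exact hc0
    by_cases h2 : i = k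
    · rw [h2, hYk]; exact ha0
    · rw [hYo δ i h1 h2]; exact hδ
  have hSxy : ∀ δ, 0 < δ → Sfun (X δ) (Y δ) = a ^ 2 := by
    intro δ hδ
    apply le_antisymm
    · apply Sfun_le
      intro i i'
      rw [div_le_iff₀ (mul_pos (hXp δ hδ i') (hYp δ hδ i))]
      by_cases h1 : i = j
      · by_cases h3 : i' = j
        · rw [h1, h3, hXj, hYj]
          nlinarith [mul_pos ha0 hc0, mul_pos (mul_pos ha0 hc0) hc0]
        · by_cases h4 : i' = k
          · rw [h1, h4, hXj, hYk, hXk, hYj]; nlinarith [mul_pos ha0 hc0]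
          · rw [h1, hXj, hYo δ i' h3 h4, hXo δ i' h3 h4, hYj]
            nlinarith [mul_pos hc0 hδ, mul_pos (mul_pos ha0 hc0) hδ]
      · by_cases h2 : i = k
        · by_cases h3 : i' = j
          · rw [h2, h3, hXk, hYj, hXj, hYk]
            nlinarith [mul_pos hc0 ha0, mul_pos (mul_pos ha0 hc0) ha0]
          · by_cases h4 : i' = k
            · rw [h2, h4, hXk, hYk]; nlinarith
            · rw [h2, hXk, hYo δ i' h3 h4, hXo δ i' h3 h4, hYk]
              nlinarith [mul_pos ha0 hδ, mul_pos hδ ha0]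
        · by_cases h3 : i' = j
          · rw [h3, hXo δ i h1 h2, hYj, hXj, hYo δ i h1 h2]
            nlinarith [mul_pos hc0 hδ, mul_pos (mul_pos ha0 hc0) hδ]
          · by_cases h4 : i' = k
            · rw [h4, hXo δ i h1 h2, hYk, hXk, hYo δ i h1 h2]
              nlinarith [mul_pos hδ ha0]
            · rw [hXo δ i h1 h2, hYo δ i' h3 h4, hXo δ i' h3 h4, hYo δ i h1 h2]
              nlinarith [mul_pos hδ hδ]
    · have hr := ratio_le_Sfun (X δ) (Y δ) j k
      rw [hXj, hYk, hXk, hYj] at hr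
      have heq : (a * c * a) / (1 * c) = a ^ 2 := by field_simp
      linarith [heq ▸ hr]
  have hD2 : ∀ δ, 0 < δ → hilbertDist (X δ) (Y δ) = 2 := by
    intro δ hδ
    rw [hilbertDist_eq, hSxy δ hδ, Real.log_pow, ha, Real.log_exp]
    norm_num
  -- decomposition of mulVec
  set px : Fin d → ℝ := P.mulVec xb with hpx
  set py : Fin d → ℝ := P.mulVec yb with hpy
  set q : Fin d → ℝ := P.mulVec w with hq
  have hq0 : ∀ i, 0 ≤ q i := fun i => mulVec_nonneg hP hw0 i
  have hpxv : ∀ i, px i = P i j * (a * c) + P i k := by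
    intro i
    rw [hpx, hxb, Matrix.mulVec_add, Matrix.mulVec_single, Matrix.mulVec_single]
    simp
  have hpyv : ∀ i, py i = P i j * c + P i k * a := by
    intro i
    rw [hpy, hyb, Matrix.mulVec_add, Matrix.mulVec_single, Matrix.mulVec_single]
    simp
    ring
  have hpxp : ∀ i, 0 < px i := fun i => by
    rw [hpxv]
    exact add_pos (mul_pos (hP i j) (mul_pos ha0 hc0)) (hP i k)
  have hpyp : ∀ i, 0 < py i := fun i => by
    rw [hpyv]
    exact add_pos (mul_pos (hP i j) hc0) (mul_pos (hP i k) ha0)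
  have hPX : ∀ δ i, P.mulVec (X δ) i = px i + δ * q i := by
    intro δ i
    rw [hX]
    show P.mulVec (xb + δ • w) i = _
    rw [Matrix.mulVec_add, Matrix.mulVec_smul]
    simp [hpx, hq]
  have hPY : ∀ δ i, P.mulVec (Y δ) i = py i + δ * q i := by
    intro δ i
    rw [hY]
    show P.mulVec (yb + δ • w) i = _
    rw [Matrix.mulVec_add, Matrix.mulVec_smul]
    simp [hpy, hq]
  set F : ℝ → ℝ := fun δ =>
    Real.log (((px i1 + δ * q i1) * (py l1 + δ * q l1)) /
      ((px l1 + δ * q l1) * (py i1 + δ * q i1))) / 2 with hF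
  have hstep : ∀ δ ∈ Set.Ioi (0:ℝ), F δ ≤ birkhoffCoeff P := by
    intro δ hδ
    have hδ0 : 0 < δ := hδ
    have hmem : hilbertDist (P.mulVec (X δ)) (P.mulVec (Y δ)) / hilbertDist (X δ) (Y δ) ∈
        {t : ℝ | ∃ x y : Fin d → ℝ, (∀ i, 0 < x i) ∧ (∀ i, 0 < y i) ∧
          0 < hilbertDist x y ∧ t = hilbertDist (P.mulVec x) (P.mulVec y) / hilbertDist x y} :=
      ⟨X δ, Y δ, hXp δ hδ0, hYp δ hδ0, by rw [hD2 δ hδ0]; norm_num, rfl⟩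
    have h1 : hilbertDist (P.mulVec (X δ)) (P.mulVec (Y δ)) / hilbertDist (X δ) (Y δ) ≤
        birkhoffCoeff P := mem_le_tau hP hmem
    have h2 : F δ ≤ hilbertDist (P.mulVec (X δ)) (P.mulVec (Y δ)) / hilbertDist (X δ) (Y δ) := by
      rw [hD2 δ hδ0, hF]
      have hfrac : 0 < ((px i1 + δ * q i1) * (py l1 + δ * q l1)) /
          ((px l1 + δ * q l1) * (py i1 + δ * q i1)) := by
        exact div_pos
          (mul_pos (add_pos_of_pos_of_nonneg (hpxp i1) (mul_nonneg hδ0.le (hq0 i1)))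
            (add_pos_of_pos_of_nonneg (hpyp l1) (mul_nonneg hδ0.le (hq0 l1))))
          (mul_pos (add_pos_of_pos_of_nonneg (hpxp l1) (mul_nonneg hδ0.le (hq0 l1)))
            (add_pos_of_pos_of_nonneg (hpyp i1) (mul_nonneg hδ0.le (hq0 i1))))
      have hle : ((px i1 + δ * q i1) * (py l1 + δ * q l1)) /
          ((px l1 + δ * q l1) * (py i1 + δ * q i1)) ≤
          Sfun (P.mulVec (X δ)) (P.mulVec (Y δ)) := by
        have := ratio_le_Sfun (P.mulVec (X δ)) (P.mulVec (Y δ)) i1 l1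
        rwa [hPX δ i1, hPX δ l1, hPY δ i1, hPY δ l1] at this
      have := Real.log_le_log hfrac hle
      rw [hilbertDist_eq]
      linarith
    exact h2.trans h1
  have hDn0 : px l1 * py i1 ≠ 0 := (mul_pos (hpxp l1) (hpyp i1)).ne'
  have hcont : ContinuousAt F 0 := by
    rw [hF]
    apply ContinuousAt.div_const
    apply ContinuousAt.log
    · apply ContinuousAt.div
      · exact (((continuousAt_const).add ((continuousAt_id).mul continuousAt_const)).mul
          ((continuousAt_const).add ((continuousAt_id).mul continuousAt_const)))
      · exact (((continuousAt_const).add ((continuousAt_id).mul continuousAt_const)).mul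
          ((continuousAt_const).add ((continuousAt_id).mul continuousAt_const)))
      · simpa using hDn0
    · have : (px i1 + 0 * q i1) * (py l1 + 0 * q l1) ≠ 0 := by
        simpa using (mul_pos (hpxp i1) (hpyp l1)).ne'
      intro hcontra
      rw [div_eq_zero_iff] at hcontra
      rcases hcontra with h' | h'
      · exact this (by simpa using h')
      · exact (by simpa using hDn0 : ¬ (px l1 + 0 * q l1) * (py i1 + 0 * q i1) = 0) h'
  have htends : Tendsto F (nhdsWithin 0 (Set.Ioi 0)) (nhds (F 0)) :=
    hcont.continuousWithinAt.tendsto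
  have hlim : F 0 ≤ birkhoffCoeff P :=
    le_of_tendsto htends (eventually_nhdsWithin_of_forall hstep)
  have hF0 : F 0 = Real.log ((a * ρ + 1) / (ρ + a)) / 2 := by
    have h1 : P l1 j ≠ 0 := (hP l1 j).ne'
    have h2 : P i1 k ≠ 0 := (hP i1 k).ne'
    have h3 : P l1 k ≠ 0 := (hP l1 k).ne'
    have h4 : P i1 j ≠ 0 := (hP i1 j).ne'
    have hval : (px i1 + 0 * q i1) * (py l1 + 0 * q l1) /
        ((px l1 + 0 * q l1) * (py i1 + 0 * q i1)) = (a * ρ + 1) / (ρ + a) := by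
      simp only [zero_mul, add_zero]
      rw [hpxv, hpxv, hpyv, hpyv, hρ, hc]
      rw [div_eq_div_iff]
      · field_simp
        ring
      · exact mul_pos
          (add_pos (mul_pos (hP l1 j) (mul_pos ha0 (div_pos (hP l1 k) (hP l1 j)))) (hP l1 k))
          (add_pos (mul_pos (hP i1 j) (div_pos (hP l1 k) (hP l1 j))) (mul_pos (hP i1 k) ha0)) |>.ne'
      · exact add_pos (div_pos (mul_pos (hP i1 j) (hP l1 k)) (mul_pos (hP l1 j) (hP i1 k))) ha0 |>.ne'
    rw [hF]
    show Real.log ((px i1 + 0 * q i1) * (py l1 + 0 * q l1) /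
        ((px l1 + 0 * q l1) * (py i1 + 0 * q i1))) / 2 = _
    rw [hval]
  rw [hF0] at hlim
  rw [ha] at hlim ⊢
  rw [hρ] at hlim
  exact hlim

lemma fwdProd_succ {A : ℕ → Matrix (Fin d) (Fin d) ℝ} {m n : ℕ} (hmn : m ≤ n) :
    fwdProd A m (n + 1) = fwdProd A m n * A (n + 1) := by
  unfold fwdProd
  have h1 : n + 1 + 1 - m = (n + 1 - m) + 1 := by omega
  rw [h1, List.range'_concat]
  have h2 : m + 1 * (n + 1 - m) = n + 1 := by omega
  rw [h2, List.map_append, List.prod_append]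
  simp

lemma mul_entries_pos {B C : Matrix (Fin d) (Fin d) ℝ}
    (hB : ∀ i j, 0 < B i j) (hC : ∀ i j, 0 < C i j) : ∀ i j, 0 < (B * C) i j := by
  intro i j
  rw [Matrix.mul_apply]
  exact Finset.sum_pos (fun k _ => mul_pos (hB i k) (hC k j)) Finset.univ_nonempty

lemma fwdProd_pos {A : ℕ → Matrix (Fin d) (Fin d) ℝ}
    (hA : ∀ k i j, 0 < A k i j) {m n : ℕ} (hmn : m ≤ n) :
    ∀ i j, 0 < fwdProd A m n i j := by
  induction n, hmn using Nat.le_induction with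
  | base =>
    have h1 : m + 1 - m = 1 := by omega
    unfold fwdProd
    rw [h1]
    simpa using hA m
  | succ n hmn ih =>
    rw [fwdProd_succ hmn]
    exact mul_entries_pos ih (hA (n + 1))

end Stmt10

open Stmt10

/-- If `τ(A_m ⋯ A_n) → 0`, then the limiting cone
`⋂_{n ≥ m} A_m ⋯ A_n (ℝ₊^d)` is a single ray spanned by a strictly positive vector. -/
theorem stmt10 {d : ℕ} (A : ℕ → Matrix (Fin d) (Fin d) ℝ)
    (hA : ∀ k i j, 0 < A k i j) (m : ℕ)
    (h : Tendsto (fun n => birkhoffCoeff (fwdProd A m n)) atTop (nhds 0)) :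
    ∃ η : Fin d → ℝ, (∀ i, 0 < η i) ∧
      (⋂ n ∈ Set.Ici m, (fun x => (fwdProd A m n).mulVec x) '' posCone d) =
        {v | ∃ t : ℝ, 0 ≤ t ∧ v = t • η} := by
  rcases eq_or_ne d 0 with rfl | hd0
  · refine ⟨fun i => i.elim0, fun i => i.elim0, ?_⟩
    ext v
    simp only [Set.mem_iInter, Set.mem_image, Set.mem_setOf_eq]
    constructor
    · intro _; exact ⟨0, le_refl 0, Subsingleton.elim _ _⟩
    · intro _ n _
      exact ⟨v, fun i => i.elim0, Subsingleton.elim _ _⟩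
  haveI : NeZero d := ⟨hd0⟩
  set P : ℕ → Matrix (Fin d) (Fin d) ℝ := fun n => fwdProd A m n with hPdef
  have hp : ∀ n, m ≤ n → ∀ i j, 0 < P n i j := fun n hn => fwdProd_pos hA hn
  set Im : ℕ → Set (Fin d → ℝ) := fun n => (fun x => (P n).mulVec x) '' posCone d with hImdef
  have hIm_sub : ∀ n, m ≤ n → Im (n + 1) ⊆ Im n := by
    rintro n hn v ⟨u, hu, rfl⟩
    refine ⟨(A (n + 1)).mulVec u, fun i => mulVec_nonneg (hA (n + 1)) hu i, ?_⟩
    show (P n).mulVec ((A (n + 1)).mulVec u) = (P (n + 1)).mulVec u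
    rw [Matrix.mulVec_mulVec]
    show (fwdProd A m n * A (n + 1)).mulVec u = (fwdProd A m (n + 1)).mulVec u
    rw [fwdProd_succ hn]
  have hchain : ∀ n n', m ≤ n → n ≤ n' → Im n' ⊆ Im n := by
    intro n n' h1 h2
    induction n', h2 using Nat.le_induction with
    | base => exact subset_rfl
    | succ n' hnn' ih => exact (hIm_sub n' (h1.trans hnn')).trans ih
  -- normalization
  set σf : (Fin d → ℝ) → ℝ := fun y => ∑ i, y i with hσf
  set ν : (Fin d → ℝ) → (Fin d → ℝ) := fun y => (σf y)⁻¹ • y with hν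
  have hσsmul : ∀ (t : ℝ) (y : Fin d → ℝ), σf (t • y) = t * σf y := by
    intro t y; simp [hσf, Finset.mul_sum]
  have hνsmul : ∀ (t : ℝ), t ≠ 0 → ∀ y, ν (t • y) = ν y := by
    intro t ht y
    rw [hν]
    dsimp only
    rw [hσsmul, smul_smul, mul_inv, mul_comm t⁻¹ (σf y)⁻¹, mul_assoc, inv_mul_cancel₀ ht,
      mul_one]
  have hσpos : ∀ n, m ≤ n → ∀ x ∈ stdSimplex ℝ (Fin d), 0 < σf ((P n).mulVec x) := by
    intro n hn x hx
    have hxne : x ≠ 0 := by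
      intro h0
      have := hx.2
      rw [h0] at this
      simp at this
    exact Finset.sum_pos (fun i _ => mulVec_pos (hp n hn) hx.1 hxne i) Finset.univ_nonempty
  set C : ℕ → Set (Fin d → ℝ) :=
    fun p => (fun x => ν ((P (m + p)).mulVec x)) '' stdSimplex ℝ (Fin d) with hC
  have hmvcont : ∀ n, Continuous fun x : Fin d → ℝ => (P n).mulVec x := by
    intro n
    have := (Matrix.mulVecLin (P n)).continuous_of_finiteDimensional
    exact this
  have hσcont : Continuous σf := continuous_finset_sum _ fun i _ => continuous_apply i
  have hCcompact : ∀ p, IsCompact (C p) := by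
    intro p
    apply (isCompact_stdSimplex ℝ (Fin d)).image_of_continuousOn
    exact (((hσcont.comp (hmvcont (m + p))).continuousOn.inv₀
      (fun x hx => (hσpos (m + p) (Nat.le_add_right m p) x hx).ne')).smul
      (hmvcont (m + p)).continuousOn)
  have hCnonempty : ∀ p, (C p).Nonempty := by
    intro p
    refine ⟨_, ⟨fun _ => (d : ℝ)⁻¹, ⟨fun i => inv_nonneg.2 (Nat.cast_nonneg d), ?_⟩, rfl⟩⟩
    rw [Finset.sum_const, Finset.card_univ, Fintype.card_fin, nsmul_eq_mul]
    rw [mul_inv_cancel₀ (by exact_mod_cast hd0)]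
  have hCdec : ∀ p, C (p + 1) ⊆ C p := by
    rintro p y ⟨x, hx, rfl⟩
    have hxne : x ≠ 0 := by
      intro h0
      have := hx.2
      rw [h0] at this
      simp at this
    set z := (A (m + p + 1)).mulVec x with hz
    have hzpos : ∀ i, 0 < z i := fun i => mulVec_pos (hA (m + p + 1)) hx.1 hxne i
    have hσz : 0 < σf z := Finset.sum_pos (fun i _ => hzpos i) Finset.univ_nonempty
    refine ⟨(σf z)⁻¹ • z, ⟨fun i => mul_nonneg (inv_nonneg.2 hσz.le) (hzpos i).le, ?_⟩, ?_⟩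
    · show σf ((σf z)⁻¹ • z) = 1
      rw [hσsmul, inv_mul_cancel₀ hσz.ne']
    · show ν ((P (m + p)).mulVec ((σf z)⁻¹ • z)) = ν ((P (m + p + 1)).mulVec x)
      rw [Matrix.mulVec_smul, hνsmul _ (inv_ne_zero hσz.ne')]
      congr 1
      rw [hz, Matrix.mulVec_mulVec, hPdef]
      rw [← fwdProd_succ (Nat.le_add_right m p)]
  obtain ⟨η, hη⟩ := IsCompact.nonempty_iInter_of_sequence_nonempty_isCompact_isClosed C
    hCdec hCnonempty (hCcompact 0) (fun p => (hCcompact p).isClosed)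
  have hηmem : ∀ n, m ≤ n → ∃ u, (∀ i, 0 ≤ u i) ∧ u ≠ 0 ∧ η = (P n).mulVec u := by
    intro n hn
    have : η ∈ C (n - m) := (Set.mem_iInter.1 hη) (n - m)
    obtain ⟨x, hx, hxeq⟩ := this
    have hmn : m + (n - m) = n := by omega
    rw [hmn] at hxeq
    have hxne : x ≠ 0 := by
      intro h0
      have := hx.2
      rw [h0] at this
      simp at this
    have hσx := hσpos n hn x hx
    refine ⟨(σf ((P n).mulVec x))⁻¹ • x, fun i => ?_, ?_, ?_⟩
    · exact mul_nonneg (inv_nonneg.2 hσx.le) (hx.1 i)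
    · intro h0
      have h1 : ((σf ((P n).mulVec x))⁻¹ • x) = 0 := h0
      have h2 : x = 0 := by
        funext i
        have := congrFun h1 i
        simp only [Pi.smul_apply, smul_eq_mul, Pi.zero_apply] at this ⊢
        rcases mul_eq_zero.1 this with h' | h'
        · exact absurd h' (inv_ne_zero hσx.ne')
        · exact h'
      exact hxne h2
    · rw [Matrix.mulVec_smul, ← hxeq]
  have hηIm : ∀ n, m ≤ n → η ∈ Im n := by
    intro n hn
    obtain ⟨u, hu, _, hueq⟩ := hηmem n hn
    exact ⟨u, hu, hueq.symm⟩
  have hηpos : ∀ i, 0 < η i := by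
    obtain ⟨u, hu, hune, hueq⟩ := hηmem m le_rfl
    intro i
    rw [hueq]
    exact mulVec_pos (hp m le_rfl) hu hune i
  refine ⟨η, hηpos, ?_⟩
  ext v
  simp only [Set.mem_iInter, Set.mem_setOf_eq]
  constructor
  · intro hv
    by_cases hv0 : v = 0
    · exact ⟨0, le_rfl, by rw [hv0]; simp⟩
    have hvmem : ∀ n, m ≤ n → ∃ u, (∀ i, 0 ≤ u i) ∧ u ≠ 0 ∧ v = (P n).mulVec u := by
      intro n hn
      obtain ⟨u, hu, hueq⟩ := hv n hn
      have hueq' : (P n).mulVec u = v := hueq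
      refine ⟨u, hu, ?_, hueq'.symm⟩
      intro h0
      rw [h0, Matrix.mulVec_zero] at hueq'
      exact hv0 hueq'.symm
    have hvpos : ∀ i, 0 < v i := by
      obtain ⟨u, hu, hune, hueq⟩ := hvmem m le_rfl
      intro i
      rw [hueq]
      exact mulVec_pos (hp m le_rfl) hu hune i
    -- the key smallness estimate
    have hsmall : ∀ ε : ℝ, 0 < ε → Real.log (Sfun v η) ≤ ε := by
      intro ε hε
      set a : ℝ := Real.exp 1 with ha
      have ha1 : 1 < a := Real.one_lt_exp_iff.2 one_pos
      have ha0 : 0 < a := lt_trans one_pos ha1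
      set E : ℝ := Real.exp ε with hE
      have hE1 : 1 < E := Real.one_lt_exp_iff.2 hε
      have hE0 : 0 < E := lt_trans one_pos hE1
      set cε : ℝ := Real.log ((a * E + 1) / (E + a)) / 2 with hcε
      have hcεpos : 0 < cε := by
        apply div_pos _ two_pos
        apply Real.log_pos
        rw [lt_div_iff₀ (by positivity)]
        nlinarith
      have hev : ∀ᶠ n in atTop, birkhoffCoeff (P n) < cε := h.eventually (gt_mem_nhds hcεpos)
      obtain ⟨n, hτ, hn⟩ := (hev.and (eventually_ge_atTop m)).exists
      have hρbound : ∀ i l jj kk,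
          P n i jj * P n l kk ≤ E * (P n l jj * P n i kk) := by
        intro i l jj kk
        by_cases hjk : jj = kk
        · subst hjk
          nlinarith [mul_pos (hp n hn i jj) (hp n hn l jj), hE1]
        by_contra hcon
        push_neg at hcon
        have hden : 0 < P n l jj * P n i kk := mul_pos (hp n hn l jj) (hp n hn i kk)
        have hρE : E < (P n i jj * P n l kk) / (P n l jj * P n i kk) :=
          (lt_div_iff₀ hden).2 (by nlinarith)
        have hlow := tau_lower (hp n hn) hjk i l
        set ρ : ℝ := (P n i jj * P n l kk) / (P n l jj * P n i kk) with hρdef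
        have hρ0 : 0 < ρ := div_pos (mul_pos (hp n hn i jj) (hp n hn l kk)) hden
        have ha2 : (1:ℝ) ≤ a ^ 2 := by nlinarith
        have hmono : Real.log ((a * E + 1) / (E + a)) ≤ Real.log ((a * ρ + 1) / (ρ + a)) := by
          apply Real.log_le_log (div_pos (by nlinarith [mul_pos ha0 hE0]) (by linarith))
          rw [div_le_div_iff₀ (by linarith) (by linarith)]
          nlinarith [mul_nonneg (by nlinarith : (0:ℝ) ≤ a ^ 2 - 1) (by linarith : (0:ℝ) ≤ ρ - E)]
        have : cε ≤ birkhoffCoeff (P n) := by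
          rw [hcε]
          calc Real.log ((a * E + 1) / (E + a)) / 2
              ≤ Real.log ((a * ρ + 1) / (ρ + a)) / 2 := by linarith
            _ ≤ birkhoffCoeff (P n) := hlow
        linarith
      obtain ⟨u, hu, hune, hueq⟩ := hvmem n hn
      obtain ⟨u', hu', hu'ne, hu'eq⟩ := hηmem n hn
      have hS : Sfun v η ≤ E := by
        apply Sfun_le
        intro i l
        rw [div_le_iff₀ (mul_pos (hvpos l) (hηpos i))]
        have key : (∑ j, P n i j * u j) * (∑ k, P n l k * u' k) ≤
            E * ((∑ j, P n l j * u j) * (∑ k, P n i k * u' k)) := by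
          apply sum_mul_sum_le
          intro j k
          have := hρbound i l j k
          nlinarith [mul_nonneg (hu j) (hu' k), mul_pos (hp n hn l j) (hp n hn i k)]
        rw [hueq, hu'eq]
        rw [mulVec_apply, mulVec_apply, mulVec_apply, mulVec_apply]
        calc (∑ j, P n i j * u j) * (∑ k, P n l k * u' k)
            ≤ E * ((∑ j, P n l j * u j) * (∑ k, P n i k * u' k)) := key
          _ = E * ((∑ k, P n l k * u k) * (∑ j, P n i j * u' j)) := by ring
      rw [Real.log_le_iff_le_exp (Sfun_pos hvpos hηpos)]
      exact hS
    have hL0 : Real.log (Sfun v η) ≤ 0 := by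
      by_contra hL
      push_neg at hL
      have := hsmall (Real.log (Sfun v η) / 2) (by linarith)
      linarith
    have hS1 : Sfun v η ≤ 1 := (Real.log_nonpos_iff (Sfun_pos hvpos hηpos).le).1 hL0
    have hpair : ∀ i l, v i * η l = v l * η i := by
      intro i l
      have h1 : v i * η l ≤ v l * η i := by
        have := (ratio_le_Sfun v η i l).trans hS1
        rwa [div_le_one (mul_pos (hvpos l) (hηpos i))] at this
      have h2 : v l * η i ≤ v i * η l := by
        have := (ratio_le_Sfun v η l i).trans hS1
        rwa [div_le_one (mul_pos (hvpos i) (hηpos l))] at this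
      linarith
    obtain ⟨i0⟩ : Nonempty (Fin d) := inferInstance
    refine ⟨v i0 / η i0, (div_pos (hvpos i0) (hηpos i0)).le, ?_⟩
    funext i
    show v i = (v i0 / η i0) * η i
    rw [div_mul_eq_mul_div, eq_div_iff (hηpos i0).ne']
    linarith [hpair i0 i]
  · rintro ⟨t, ht0, rfl⟩ n hn
    obtain ⟨u, hu, _, hueq⟩ := hηmem n hn
    refine ⟨t • u, fun i => mul_nonneg ht0 (hu i), ?_⟩
    show (P n).mulVec (t • u) = t • η
    rw [hueq, Matrix.mulVec_smul]
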